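/- Let K be a field, V a finite-dimensional K-vector space of dimension n, and M a subspace of the space of symmetric bilinear forms on V. If U is a subspace of V of dimension r with 0 < r < n and dim M ≥ r·n + ε for some ε ≥ 0, then the subspace M_U of forms in M whose radical contains U satisfies dim M_U ≥ r(r−1)/2 + ε. -/

import Mathlib

set_option maxHeartbeats 1000000
set_option maxSynthPendingDepth 3
set_option synthInstance.maxHeartbeats 1000000

lemma aux_rank {K A B C : Type*} [Field K] [AddCommGroup A] [Module K A]
    [FiniteDimensional K A] [AddCommGroup B] [Module K B] [FiniteDimensional K B]
    [AddCommGroup C] [Module K C] [FiniteDimensional K C]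
    (Ψ : A →ₗ[K] B) (T : B →ₗ[K] C)
    (h1 : LinearMap.range Ψ ≤ LinearMap.ker T) (h2 : Function.Surjective T) :
    Module.finrank K A + Module.finrank K C ≤
      Module.finrank K (LinearMap.ker Ψ) + Module.finrank K B := by
  have e1 := LinearMap.finrank_range_add_finrank_ker Ψ
  have e2 := LinearMap.finrank_range_add_finrank_ker T
  have e5 : Module.finrank K (LinearMap.range T) = Module.finrank K C := by
    rw [LinearMap.range_eq_top.mpr h2, finrank_top]
  have e6 : Module.finrank K (LinearMap.range Ψ) ≤ Module.finrank K (LinearMap.ker T) :=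
    Submodule.finrank_mono h1
  omega

/-- symmetric analogue of the radical-dimension bound:
`dim M_U ≥ r(r-1)/2 + ε`. -/
theorem stmt1 (K : Type*) [Field K] (V : Type*) [AddCommGroup V] [Module K V]
    [FiniteDimensional K V] (n r ε : ℕ) (hn : Module.finrank K V = n)
    (M : Submodule K (V →ₗ[K] V →ₗ[K] K))
    (hsymm : ∀ f ∈ M, ∀ x y : V, f x y = f y x)
    (U : Submodule K V) (hU : Module.finrank K ↥U = r)
    (hr : 0 < r) (hrn : r < n)
    (hM : r * n + ε ≤ Module.finrank K ↥M) :
    r * (r - 1) / 2 + ε ≤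
      Module.finrank K ↥(M ⊓ ⨅ u ∈ U, LinearMap.ker (LinearMap.applyₗ (R := K) u)) := by
  classical
  set N : Submodule K (V →ₗ[K] V →ₗ[K] K) :=
    M ⊓ ⨅ u ∈ U, LinearMap.ker (LinearMap.applyₗ (R := K) u) with hN
  let bU : Module.Basis (Fin r) K U := (Module.finBasis K U).reindex (finCongr hU)
  let v : Fin r → V := fun i => (bU i : V)
  -- index type for strictly lower pairs
  let S := Σ i : Fin r, Fin (i : ℕ)
  let lo : S → Fin r := fun p => Fin.castLE p.1.isLt.le p.2
  have hlo : ∀ p : S, (lo p : ℕ) < (p.1 : ℕ) := fun p => p.2.isLt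
  let T : (Fin r → (V →ₗ[K] K)) →ₗ[K] (S → K) :=
    LinearMap.pi fun p =>
      (LinearMap.applyₗ (v p.1)).comp (LinearMap.proj (lo p)) -
        (LinearMap.applyₗ (v (lo p))).comp (LinearMap.proj p.1)
  let Ψ : ↥M →ₗ[K] (Fin r → (V →ₗ[K] K)) :=
    LinearMap.pi fun i => (LinearMap.applyₗ (v i)).comp M.subtype
  -- Fact 1 : ker Ψ = N.comap M.subtype
  have hker : LinearMap.ker Ψ = N.comap M.subtype := by
    ext f
    simp only [LinearMap.mem_ker, Submodule.mem_comap, hN, Submodule.mem_inf,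
      Submodule.coe_subtype, Submodule.mem_iInf, LinearMap.mem_ker, funext_iff]
    constructor
    · intro h
      refine ⟨f.2, fun u hu => ?_⟩
      have hw : u = ∑ i, bU.repr ⟨u, hu⟩ i • v i := by
        calc u = ((∑ i, bU.repr ⟨u, hu⟩ i • bU i : U) : V) := by
              rw [bU.sum_repr ⟨u, hu⟩]
          _ = ∑ i, bU.repr ⟨u, hu⟩ i • v i := by
              simp only [v, Submodule.coe_sum, Submodule.coe_smul]
      have hi : ∀ i, (f : V →ₗ[K] V →ₗ[K] K) (v i) = 0 := by
        intro i
        have := h i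
        simpa [Ψ] using this
      show (f : V →ₗ[K] V →ₗ[K] K) u = 0
      rw [hw]
      simp [hi]
    · intro ⟨_, h⟩ i
      have := h (v i) (bU i).2
      simpa [Ψ] using this
  -- Fact 2 : range Ψ ≤ ker T
  have hrange : LinearMap.range Ψ ≤ LinearMap.ker T := by
    rintro x ⟨f, rfl⟩
    rw [LinearMap.mem_ker]
    funext p
    show (f : V →ₗ[K] V →ₗ[K] K) (v (lo p)) (v p.1) -
      (f : V →ₗ[K] V →ₗ[K] K) (v p.1) (v (lo p)) = 0
    rw [hsymm (f : V →ₗ[K] V →ₗ[K] K) f.2, sub_self]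
  -- Fact 3 : T surjective
  have hsurj : Function.Surjective T := by
    intro h
    choose φ hφ using fun i => LinearMap.exists_extend (V' := K) (bU.coord i)
    have hφ' : ∀ i k, φ i (v k) = if i = k then 1 else 0 := by
      intro i k
      have : φ i (v k) = bU.coord i (bU k) := by
        rw [← hφ i]; rfl
      rw [this, Module.Basis.coord_apply, Module.Basis.repr_self, Finsupp.single_apply]
      simp [eq_comm]
    refine ⟨fun j => ∑ i : Fin r, (if hji : (j : ℕ) < (i : ℕ) then h (⟨i, ⟨(j : ℕ), hji⟩⟩ : S) else 0) • φ i, ?_⟩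
    funext p
    have hval : ∀ j k : Fin r,
        (∑ i : Fin r, (if hji : (j : ℕ) < (i : ℕ) then h (⟨i, ⟨(j : ℕ), hji⟩⟩ : S) else 0) • φ i) (v k)
          = if hjk : (j : ℕ) < (k : ℕ) then h (⟨k, ⟨(j : ℕ), hjk⟩⟩ : S) else 0 := by
      intro j k
      rw [LinearMap.sum_apply]
      rw [Finset.sum_eq_single k]
      · split <;> simp [hφ']
      · intro i _ hik
        split <;> simp [hφ', hik]
      · simp
    show (∑ i, _ • φ i) (v p.1) - (∑ i, _ • φ i) (v (lo p)) = h p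
    rw [hval, hval]
    rw [dif_pos (hlo p), dif_neg (show ¬ ((p.1 : ℕ) < (lo p : ℕ)) by have := hlo p; omega)]
    rw [sub_zero]
    rfl
  have key : Module.finrank K ↥M + Module.finrank K (S → K) ≤
      Module.finrank K (LinearMap.ker Ψ) + Module.finrank K (Fin r → (V →ₗ[K] K)) :=
    aux_rank Ψ T hrange hsurj
  have e3 : Module.finrank K (Fin r → (V →ₗ[K] K)) = r * n := by
    rw [Module.finrank_pi_fintype]
    simp [Module.finrank_linearMap, hn]
  have e4 : Module.finrank K (LinearMap.ker Ψ) = Module.finrank K N := by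
    rw [hker]
    exact LinearEquiv.finrank_eq (Submodule.comapSubtypeEquivOfLe inf_le_left)
  have e5 : Module.finrank K (S → K) = Fintype.card S := Module.finrank_pi K
  have cardS : Fintype.card S * 2 = r * (r - 1) := by
    rw [Fintype.card_sigma]
    simp only [Fintype.card_fin]
    rw [Fin.sum_univ_eq_sum_range (fun i => i) r, Finset.sum_range_id_mul_two]
  rw [e3, e4, e5] at key
  obtain ⟨Q, hQ⟩ : ∃ Q, Q = r * (r - 1) := ⟨_, rfl⟩
  rw [← hQ] at cardS ⊢
  obtain ⟨RN, hRN⟩ : ∃ RN, RN = r * n := ⟨_, rfl⟩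
  rw [← hRN] at key hM
  omega
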